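/- Let p ≥ 0, β ∈ (0, 2], W(x) = |x|^p·e^{|x|^β}, and g_a(y) = (a/π)^{1/4}·e^{−a y²/2}. Then for every μ > 1 there exists a₀ > 0 such that for all a ≥ a₀ and all x ∈ ℝ, (W ∗ g_a²)(x) ≤ 2·(W(μ·x) + 1). -/

import Mathlib

open MeasureTheory Real

/-- The `L²`-normalised gaussian `g_a(y) = (a/π)^{1/4} e^{-a y²/2}`. -/
noncomputable def gauss (a y : ℝ) : ℝ := (a / π) ^ ((1 : ℝ) / 4) * Real.exp (-a * y ^ 2 / 2)

open Filter Topology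


lemma rpow_abs_le_exp (t q : ℝ) (ht : 0 ≤ t) (hq : 0 ≤ q) : t ^ q ≤ Real.exp (q * t) := by
  rcases le_total t 1 with h | h
  · calc t ^ q ≤ 1 := Real.rpow_le_one ht h hq
    _ ≤ Real.exp (q * t) := Real.one_le_exp (by positivity)
  · have ht0 : 0 < t := lt_of_lt_of_le one_pos h
    rw [Real.rpow_def_of_pos ht0]
    refine Real.exp_le_exp.2 ?_
    rw [mul_comm]
    exact mul_le_mul_of_nonneg_left (Real.log_le_self ht) hq

lemma rpow_beta_le (t β : ℝ) (ht : 0 ≤ t) (hβ0 : 0 < β) (hβ2 : β ≤ 2) : t ^ β ≤ 1 + t ^ 2 := by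
  rcases le_total t 1 with h | h
  · have := Real.rpow_le_one ht h hβ0.le
    nlinarith [sq_nonneg t]
  · have h1 : t ^ β ≤ t ^ (2 : ℝ) := Real.rpow_le_rpow_of_exponent_le h hβ2
    rw [Real.rpow_two] at h1
    linarith

lemma integ_aux (q C b β : ℝ) (hq : 0 ≤ q) (hC : 0 ≤ C) (hβ0 : 0 < β) (hβ2 : β ≤ 2)
    (hb : C + 1/2 ≤ b) :
    Integrable (fun y : ℝ => |y| ^ q * Real.exp (C * |y| ^ β) * Real.exp (-(b * y ^ 2))) := by
  have hcont : Continuous fun y : ℝ => |y| ^ q * Real.exp (C * |y| ^ β) * Real.exp (-(b * y ^ 2)) := by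
    refine Continuous.mul (Continuous.mul ?_ ?_) ?_
    · exact continuous_abs.rpow_const (fun x => Or.inr hq)
    · exact (continuous_const.mul (continuous_abs.rpow_const (fun x => Or.inr hβ0.le))).rexp
    · exact ((continuous_const.mul (continuous_pow 2)).neg).rexp
  refine (((integrable_exp_neg_mul_sq (by norm_num : (0:ℝ) < 1/4)).const_mul
      (Real.exp (C + q ^ 2))).mono' hcont.aestronglyMeasurable ?_)
  refine Filter.Eventually.of_forall fun y => ?_
  have h0 : (0:ℝ) ≤ |y| ^ q * Real.exp (C * |y| ^ β) * Real.exp (-(b * y ^ 2)) := by positivity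
  rw [Real.norm_eq_abs, abs_of_nonneg h0]
  have h1 : |y| ^ q ≤ Real.exp (q * |y|) := rpow_abs_le_exp _ _ (abs_nonneg y) hq
  have h2 : |y| ^ β ≤ 1 + y ^ 2 := by
    have := rpow_beta_le |y| β (abs_nonneg y) hβ0 hβ2
    rwa [sq_abs] at this
  have h3 : Real.exp (C * |y| ^ β) ≤ Real.exp (C * (1 + y ^ 2)) :=
    Real.exp_le_exp.2 (mul_le_mul_of_nonneg_left h2 hC)
  calc |y| ^ q * Real.exp (C * |y| ^ β) * Real.exp (-(b * y ^ 2))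
      ≤ Real.exp (q * |y|) * Real.exp (C * (1 + y ^ 2)) * Real.exp (-(b * y ^ 2)) := by
        refine mul_le_mul_of_nonneg_right (mul_le_mul h1 h3 (by positivity) (by positivity)) (by positivity)
    _ = Real.exp (q * |y| + C * (1 + y ^ 2) + -(b * y ^ 2)) := by rw [← Real.exp_add, ← Real.exp_add]
    _ ≤ Real.exp (C + q ^ 2 + -(1/4 * y ^ 2)) := by
        refine Real.exp_le_exp.2 ?_
        nlinarith [sq_nonneg (q - |y| / 2), sq_abs y, sq_nonneg y]
    _ = Real.exp (C + q ^ 2) * Real.exp (-(1/4) * y ^ 2) := by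
        rw [← Real.exp_add]; ring_nf

lemma sqrt_tendsto_atTop : Tendsto Real.sqrt atTop atTop :=
  Tendsto.congr (fun a => (Real.sqrt_eq_rpow a).symm)
    (tendsto_rpow_atTop (by norm_num : (0:ℝ) < 1/2))

lemma change_var (q C a : ℝ) (β : ℝ) (ha : 0 < a) :
    (∫ y : ℝ, Real.sqrt (a / π) * (|y| ^ q * Real.exp (C * |y| ^ β) * Real.exp (-(a * y ^ 2))))
      = ∫ z : ℝ, (Real.sqrt π)⁻¹ *
          (|z / Real.sqrt a| ^ q * Real.exp (C * |z / Real.sqrt a| ^ β) * Real.exp (-(z ^ 2))) := by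
  have hsa : 0 < Real.sqrt a := Real.sqrt_pos.2 ha
  set g : ℝ → ℝ := fun y => |y| ^ q * Real.exp (C * |y| ^ β) * Real.exp (-(a * y ^ 2)) with hg
  have h1 : ∀ z : ℝ, |z / Real.sqrt a| ^ q * Real.exp (C * |z / Real.sqrt a| ^ β)
      * Real.exp (-(z ^ 2)) = g (z / Real.sqrt a) := by
    intro z
    have : a * (z / Real.sqrt a) ^ 2 = z ^ 2 := by
      rw [div_pow, Real.sq_sqrt ha.le]
      field_simp
    rw [hg]; simp only [this]
  have h2 : (∫ z : ℝ, g (z / Real.sqrt a)) = |Real.sqrt a| • ∫ y, g y :=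
    MeasureTheory.Measure.integral_comp_div g (Real.sqrt a)
  calc (∫ y : ℝ, Real.sqrt (a / π) * g y) = Real.sqrt (a / π) * ∫ y, g y :=
        MeasureTheory.integral_const_mul _ _
    _ = (Real.sqrt π)⁻¹ * ∫ z : ℝ, g (z / Real.sqrt a) := by
        rw [h2, abs_of_nonneg (Real.sqrt_nonneg a), smul_eq_mul, Real.sqrt_div ha.le]
        ring
    _ = _ := by
        rw [← MeasureTheory.integral_const_mul]
        congr 1 with z
        rw [h1 z]

lemma tendsto_aux (q C β : ℝ) (hq : 0 ≤ q) (hC : 0 ≤ C) (hβ0 : 0 < β) (hβ2 : β ≤ 2) :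
    Tendsto (fun a : ℝ => ∫ y : ℝ, Real.sqrt (a / π) *
      (|y| ^ q * Real.exp (C * |y| ^ β) * Real.exp (-(a * y ^ 2)))) atTop
      (𝓝 (if q = 0 then 1 else 0)) := by
  have hπ : (0:ℝ) < Real.sqrt π := Real.sqrt_pos.2 Real.pi_pos
  set F : ℝ → ℝ → ℝ := fun a z => (Real.sqrt π)⁻¹ *
      (|z / Real.sqrt a| ^ q * Real.exp (C * |z / Real.sqrt a| ^ β) * Real.exp (-(z ^ 2))) with hF
  set f : ℝ → ℝ := fun z => (Real.sqrt π)⁻¹ *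
      ((if q = 0 then (1:ℝ) else 0) * Real.exp (-(z ^ 2))) with hf
  have main : Tendsto (fun a => ∫ z, F a z) atTop (𝓝 (∫ z, f z)) := by
    refine tendsto_integral_filter_of_dominated_convergence
      (fun z => (Real.sqrt π)⁻¹ * Real.exp C * (|z| ^ q * Real.exp (-(1/2 * z ^ 2)))) ?_ ?_ ?_ ?_
    · refine Eventually.of_forall fun a => Continuous.aestronglyMeasurable ?_
      refine continuous_const.mul (Continuous.mul (Continuous.mul ?_ ?_) ?_)
      · exact (continuous_id.div_const _).abs.rpow_const (fun x => Or.inr hq)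
      · exact (continuous_const.mul
          ((continuous_id.div_const _).abs.rpow_const (fun x => Or.inr hβ0.le))).rexp
      · exact (continuous_pow 2).neg.rexp
    · filter_upwards [eventually_ge_atTop (max 1 (2 * C + 1))] with a ha
      have ha1 : (1:ℝ) ≤ a := le_trans (le_max_left _ _) ha
      have ha2 : 2 * C + 1 ≤ a := le_trans (le_max_right _ _) ha
      have ha0 : (0:ℝ) < a := lt_of_lt_of_le one_pos ha1
      refine Eventually.of_forall fun z => ?_
      have hsa1 : 1 ≤ Real.sqrt a := by
        rw [show (1:ℝ) = Real.sqrt 1 by simp]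
        exact Real.sqrt_le_sqrt ha1
      have habs : |z / Real.sqrt a| = |z| / Real.sqrt a := by
        rw [abs_div, abs_of_nonneg (Real.sqrt_nonneg a)]
      have hle : |z / Real.sqrt a| ≤ |z| := by
        rw [habs]; exact div_le_self (abs_nonneg z) hsa1
      have h1 : |z / Real.sqrt a| ^ q ≤ |z| ^ q :=
        Real.rpow_le_rpow (abs_nonneg _) hle hq
      have hzsq : (z / Real.sqrt a) ^ 2 = z ^ 2 / a := by
        rw [div_pow, Real.sq_sqrt ha0.le]
      have h2 : C * |z / Real.sqrt a| ^ β ≤ C + 1/2 * z ^ 2 := by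
        have hb := rpow_beta_le |z / Real.sqrt a| β (abs_nonneg _) hβ0 hβ2
        rw [sq_abs, hzsq] at hb
        have hkey : C * (z ^ 2 / a) ≤ 1/2 * z ^ 2 := by
          rw [← mul_div_assoc, div_le_iff₀ ha0]
          nlinarith [sq_nonneg z]
        calc C * |z / Real.sqrt a| ^ β ≤ C * (1 + z ^ 2 / a) :=
              mul_le_mul_of_nonneg_left hb hC
          _ = C + C * (z ^ 2 / a) := by ring
          _ ≤ C + 1/2 * z ^ 2 := by linarith
      have hF0 : 0 ≤ F a z := by rw [hF]; positivity
      rw [Real.norm_eq_abs, abs_of_nonneg hF0]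
      have hexpeq : Real.exp (C + 1/2 * z ^ 2) * Real.exp (-(z ^ 2))
          = Real.exp C * Real.exp (-(1/2 * z ^ 2)) := by
        rw [← Real.exp_add, ← Real.exp_add]; congr 1; ring
      calc F a z = (Real.sqrt π)⁻¹ * (|z / Real.sqrt a| ^ q *
            (Real.exp (C * |z / Real.sqrt a| ^ β) * Real.exp (-(z ^ 2)))) := by rw [hF]; ring
        _ ≤ (Real.sqrt π)⁻¹ * (|z| ^ q *
            (Real.exp (C + 1/2 * z ^ 2) * Real.exp (-(z ^ 2)))) := by
            gcongr
        _ = (Real.sqrt π)⁻¹ * Real.exp C * (|z| ^ q * Real.exp (-(1/2 * z ^ 2))) := by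
            rw [hexpeq]; ring
    · have h := integ_aux q 0 (1/2) β hq le_rfl hβ0 hβ2 (by norm_num)
      simp only [zero_mul, Real.exp_zero, mul_one] at h
      exact h.const_mul _
    · refine Eventually.of_forall fun z => ?_
      have hdiv : Tendsto (fun a : ℝ => |z / Real.sqrt a|) atTop (𝓝 0) := by
        have h1 : Tendsto (fun a : ℝ => |z| / Real.sqrt a) atTop (𝓝 0) :=
          tendsto_const_nhds.div_atTop sqrt_tendsto_atTop
        refine h1.congr fun a => ?_
        rw [abs_div, abs_of_nonneg (Real.sqrt_nonneg _)]
      have hexp : Tendsto (fun a : ℝ => Real.exp (C * |z / Real.sqrt a| ^ β)) atTop (𝓝 1) := by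
        have h2 : Tendsto (fun a : ℝ => |z / Real.sqrt a| ^ β) atTop (𝓝 0) := by
          have hc : ContinuousAt (fun t : ℝ => t ^ β) 0 :=
            Real.continuousAt_rpow_const 0 β (Or.inr hβ0.le)
          have := hc.tendsto.comp hdiv
          simpa [Real.zero_rpow hβ0.ne', Function.comp_def] using this
        have h4 : Tendsto (fun a : ℝ => C * |z / Real.sqrt a| ^ β) atTop (𝓝 0) := by
          simpa using h2.const_mul C
        have := (Real.continuous_exp.tendsto 0).comp h4
        simpa [Function.comp_def] using this
      have hq' : Tendsto (fun a : ℝ => |z / Real.sqrt a| ^ q) atTop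
          (𝓝 (if q = 0 then 1 else 0)) := by
        rcases eq_or_lt_of_le hq with rfl | hq0
        · simpa [Real.rpow_zero] using (tendsto_const_nhds : Tendsto (fun _ : ℝ => (1:ℝ)) atTop _)
        · have hc : ContinuousAt (fun t : ℝ => t ^ q) 0 :=
            Real.continuousAt_rpow_const 0 q (Or.inr hq)
          have h3 := hc.tendsto.comp hdiv
          rw [if_neg hq0.ne']
          simpa [Real.zero_rpow hq0.ne', Function.comp_def] using h3
      have hcomb : Tendsto (fun a : ℝ => (Real.sqrt π)⁻¹ * (|z / Real.sqrt a| ^ q *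
          Real.exp (C * |z / Real.sqrt a| ^ β) * Real.exp (-(z ^ 2)))) atTop
          (𝓝 ((Real.sqrt π)⁻¹ * ((if q = 0 then 1 else 0) * 1 * Real.exp (-(z ^ 2))))) :=
        ((hq'.mul hexp).mul
          (tendsto_const_nhds : Tendsto (fun _ : ℝ => Real.exp (-(z ^ 2))) atTop _)).const_mul _
      simpa [hF, hf] using hcomb
  have hval : (∫ z, f z) = (if q = 0 then 1 else 0) := by
    rw [hf]
    split_ifs with h
    · simp only [one_mul]
      rw [MeasureTheory.integral_const_mul]
      have : (∫ z : ℝ, Real.exp (-(z ^ 2))) = Real.sqrt (π / 1) := by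
        rw [← integral_gaussian 1]
        congr 1 with z
        ring_nf
      rw [this]
      simp [inv_mul_cancel₀ hπ.ne']
    · simp
  rw [← hval]
  refine main.congr' ?_
  filter_upwards [eventually_gt_atTop (0:ℝ)] with a ha
  exact (change_var q C a β ha).symm


lemma pointwise_bound (p β μ : ℝ) (hp : 0 ≤ p) (hβ0 : 0 < β) (hβ2 : β ≤ 2) (hμ : 1 < μ)
    (x y : ℝ) :
    |x - y| ^ p * Real.exp (|x - y| ^ β) ≤
      (|μ * x| ^ p * Real.exp (|μ * x| ^ β) + 1) *
        ((1 + (if p = 0 then 0 else Real.exp 1 * (μ / (μ - 1)) ^ p) * |y| ^ p) *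
          Real.exp ((μ / (μ - 1)) ^ β * |y| ^ β)) := by
  have hμ0 : (0:ℝ) < μ := lt_trans one_pos hμ
  have hμ1 : (0:ℝ) < μ - 1 := by linarith
  set D : ℝ := μ / (μ - 1) with hD
  have hD0 : 0 < D := div_pos hμ0 hμ1
  have habs : |μ * x| = μ * |x| := by rw [abs_mul, abs_of_pos hμ0]
  have htri : |x - y| ≤ |x| + |y| := by
    rw [sub_eq_add_neg]
    calc |x + -y| ≤ |x| + |-y| := abs_add_le x (-y)
      _ = |x| + |y| := by rw [abs_neg]
  have hxy : |x - y| ≤ max (μ * |x|) (D * |y|) := by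
    rcases le_total |y| ((μ - 1) * |x|) with h | h
    · refine le_trans htri (le_max_of_le_left ?_)
      nlinarith
    · refine le_trans htri (le_max_of_le_right ?_)
      have hchain : (|x| + |y|) * (μ - 1) ≤ (D * |y|) * (μ - 1) := by
        calc (|x| + |y|) * (μ - 1) = (μ - 1) * |x| + (μ - 1) * |y| := by ring
          _ ≤ |y| + (μ - 1) * |y| := by linarith
          _ = μ * |y| := by ring
          _ = (D * |y|) * (μ - 1) := by rw [hD]; field_simp
      exact le_of_mul_le_mul_right hchain hμ1
  have hmax_nonneg : 0 ≤ max (μ * |x|) (D * |y|) :=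
    le_max_of_le_left (by positivity)
  have hsplit : ∀ r : ℝ, 0 ≤ r →
      |x - y| ^ r ≤ (μ * |x|) ^ r + (D * |y|) ^ r := by
    intro r hr
    calc |x - y| ^ r ≤ (max (μ * |x|) (D * |y|)) ^ r :=
          Real.rpow_le_rpow (abs_nonneg _) hxy hr
      _ ≤ (μ * |x|) ^ r + (D * |y|) ^ r := by
          rcases max_choice (μ * |x|) (D * |y|) with h | h <;> rw [h]
          · exact le_add_of_nonneg_right (by positivity)
          · exact le_add_of_nonneg_left (by positivity)
  have hexp : Real.exp (|x - y| ^ β) ≤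
      Real.exp ((μ * |x|) ^ β) * Real.exp (D ^ β * |y| ^ β) := by
    rw [← Real.exp_add]
    refine Real.exp_le_exp.2 ?_
    have := hsplit β hβ0.le
    rwa [Real.mul_rpow hD0.le (abs_nonneg y)] at this
  have hkey5 : Real.exp ((μ * |x|) ^ β) ≤
      Real.exp 1 * ((μ * |x|) ^ p * Real.exp ((μ * |x|) ^ β) + 1) := by
    set u : ℝ := μ * |x| with hu
    have hu0 : 0 ≤ u := by positivity
    rcases le_total u 1 with h | h
    · have h1 : u ^ β ≤ 1 := Real.rpow_le_one hu0 h hβ0.le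
      have h2 : Real.exp (u ^ β) ≤ Real.exp 1 := Real.exp_le_exp.2 h1
      have h3 : (0:ℝ) ≤ u ^ p * Real.exp (u ^ β) := by positivity
      nlinarith [Real.exp_pos (1:ℝ)]
    · have h1 : 1 ≤ u ^ p := by
        rw [← Real.one_rpow p]
        exact Real.rpow_le_rpow zero_le_one h hp
      have h2 : Real.exp (u ^ β) ≤ u ^ p * Real.exp (u ^ β) :=
        le_mul_of_one_le_left (Real.exp_pos _).le h1
      have h3 : (1:ℝ) ≤ Real.exp 1 := Real.one_le_exp zero_le_one
      nlinarith [Real.exp_pos (u ^ β), Real.rpow_nonneg hu0 p]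
  rw [habs]
  by_cases hp0 : p = 0
  · subst hp0
    rw [if_pos rfl]
    simp only [Real.rpow_zero, one_mul, zero_mul, add_zero]
    calc Real.exp (|x - y| ^ β)
        ≤ Real.exp ((μ * |x|) ^ β) * Real.exp (D ^ β * |y| ^ β) := hexp
      _ ≤ (Real.exp ((μ * |x|) ^ β) + 1) * Real.exp (D ^ β * |y| ^ β) := by
          gcongr
          linarith [Real.exp_pos ((μ * |x|) ^ β)]
  · rw [if_neg hp0]
    have hsp := hsplit p hp
    rw [Real.mul_rpow hD0.le (abs_nonneg y)] at hsp
    set W : ℝ := (μ * |x|) ^ p * Real.exp ((μ * |x|) ^ β) with hW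
    have hW0 : 0 ≤ W := by positivity
    calc |x - y| ^ p * Real.exp (|x - y| ^ β)
        ≤ ((μ * |x|) ^ p + D ^ p * |y| ^ p) *
            (Real.exp ((μ * |x|) ^ β) * Real.exp (D ^ β * |y| ^ β)) := by
          refine mul_le_mul hsp hexp (by positivity) (by positivity)
      _ = (W + D ^ p * |y| ^ p * Real.exp ((μ * |x|) ^ β)) *
            Real.exp (D ^ β * |y| ^ β) := by rw [hW]; ring
      _ ≤ ((W + 1) + D ^ p * |y| ^ p * (Real.exp 1 * (W + 1))) *
            Real.exp (D ^ β * |y| ^ β) := by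
          gcongr <;> linarith [hkey5]
      _ = (W + 1) * ((1 + Real.exp 1 * D ^ p * |y| ^ p) *
            Real.exp (D ^ β * |y| ^ β)) := by ring

lemma gauss_sq (a y : ℝ) (ha : 0 ≤ a) :
    gauss a y ^ 2 = Real.sqrt (a / π) * Real.exp (-(a * y ^ 2)) := by
  have h1 : ((a / π) ^ ((1:ℝ)/4)) ^ 2 = Real.sqrt (a / π) := by
    rw [← Real.rpow_natCast ((a / π) ^ ((1:ℝ)/4)) 2,
      ← Real.rpow_mul (by positivity : (0:ℝ) ≤ a / π), Real.sqrt_eq_rpow]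
    norm_num
  have h2 : Real.exp (-a * y ^ 2 / 2) ^ 2 = Real.exp (-(a * y ^ 2)) := by
    rw [pow_two, ← Real.exp_add]; congr 1; ring
  rw [gauss, mul_pow, h1, h2]

/-- For `W(x) = |x|^p e^{|x|^β}` and every `μ > 1` there is `a₀ > 0` such that
`(W ∗ g_a²)(x) ≤ 2 (W(μx) + 1)` for all `a ≥ a₀` and all `x`. -/
theorem exponential_potential_convolution_bound (p β : ℝ) (hp : 0 ≤ p) (hβ0 : 0 < β)
    (hβ2 : β ≤ 2) (μ : ℝ) (hμ : 1 < μ) :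
    ∃ a₀ : ℝ, 0 < a₀ ∧ ∀ a : ℝ, a₀ ≤ a → ∀ x : ℝ,
      (∫ y : ℝ, (|x - y| ^ p * Real.exp (|x - y| ^ β)) * gauss a y ^ 2)
        ≤ 2 * (|μ * x| ^ p * Real.exp (|μ * x| ^ β) + 1) := by
  have hμ0 : (0:ℝ) < μ := lt_trans one_pos hμ
  have hμ1 : (0:ℝ) < μ - 1 := by linarith
  set D : ℝ := μ / (μ - 1) with hDdef
  have hD0 : 0 < D := div_pos hμ0 hμ1
  set Cβ : ℝ := D ^ β with hCβdef
  have hCβ0 : 0 < Cβ := Real.rpow_pos_of_pos hD0 β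
  set c : ℝ := if p = 0 then 0 else Real.exp 1 * D ^ p with hcdef
  have hc0 : 0 ≤ c := by
    rw [hcdef]; split_ifs
    · exact le_refl 0
    · positivity
  set I : ℝ → ℝ → ℝ := fun q a => ∫ y : ℝ, Real.sqrt (a / π) *
      (|y| ^ q * Real.exp (Cβ * |y| ^ β) * Real.exp (-(a * y ^ 2))) with hIdef
  have T0 : Tendsto (fun a => I 0 a) atTop (𝓝 1) := by
    have h := tendsto_aux 0 Cβ β le_rfl hCβ0.le hβ0 hβ2
    rw [if_pos rfl] at h
    exact h
  have Tp : Tendsto (fun a => I p a) atTop (𝓝 (if p = 0 then 1 else 0)) :=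
    tendsto_aux p Cβ β hp hCβ0.le hβ0 hβ2
  have hJ : Tendsto (fun a => I 0 a + c * I p a) atTop (𝓝 1) := by
    have h := T0.add (Tp.const_mul c)
    have hval : (1 : ℝ) + c * (if p = 0 then 1 else 0) = 1 := by
      rw [hcdef]; split_ifs <;> ring
    rwa [hval] at h
  have hev : ∀ᶠ a in atTop, I 0 a + c * I p a ≤ 2 :=
    (hJ.eventually_lt_const (by norm_num : (1:ℝ) < 2)).mono fun a ha => ha.le
  have hev2 : ∀ᶠ a : ℝ in atTop, Cβ + 1/2 ≤ a := eventually_ge_atTop _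
  obtain ⟨a₀, ha₀⟩ := eventually_atTop.1 (hev.and hev2)
  refine ⟨max a₀ 1, lt_of_lt_of_le one_pos (le_max_right _ _), fun a ha x => ?_⟩
  have haa : a₀ ≤ a := le_trans (le_max_left _ _) ha
  have ha1 : (1:ℝ) ≤ a := le_trans (le_max_right _ _) ha
  have ha0 : (0:ℝ) < a := lt_of_lt_of_le one_pos ha1
  obtain ⟨hJa, haC⟩ := ha₀ a haa
  set W : ℝ := |μ * x| ^ p * Real.exp (|μ * x| ^ β) with hWdef
  have hW0 : 0 ≤ W := by rw [hWdef]; positivity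
  have hΦ0 : Integrable (fun y : ℝ => Real.sqrt (a / π) *
      (|y| ^ (0:ℝ) * Real.exp (Cβ * |y| ^ β) * Real.exp (-(a * y ^ 2)))) :=
    (integ_aux 0 Cβ a β le_rfl hCβ0.le hβ0 hβ2 haC).const_mul _
  have hΦp : Integrable (fun y : ℝ => Real.sqrt (a / π) *
      (|y| ^ p * Real.exp (Cβ * |y| ^ β) * Real.exp (-(a * y ^ 2)))) :=
    (integ_aux p Cβ a β hp hCβ0.le hβ0 hβ2 haC).const_mul _
  have hgint : Integrable (fun y : ℝ => (W + 1) *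
      (Real.sqrt (a / π) * (|y| ^ (0:ℝ) * Real.exp (Cβ * |y| ^ β) * Real.exp (-(a * y ^ 2)))
        + c * (Real.sqrt (a / π) *
          (|y| ^ p * Real.exp (Cβ * |y| ^ β) * Real.exp (-(a * y ^ 2)))))) :=
    (hΦ0.add (hΦp.const_mul c)).const_mul _
  have hLHS : (∫ y : ℝ, (|x - y| ^ p * Real.exp (|x - y| ^ β)) * gauss a y ^ 2)
      = ∫ y : ℝ, (|x - y| ^ p * Real.exp (|x - y| ^ β)) *
          (Real.sqrt (a / π) * Real.exp (-(a * y ^ 2))) := by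
    congr 1 with y
    rw [gauss_sq a y ha0.le]
  rw [hLHS]
  have hmono : (∫ y : ℝ, (|x - y| ^ p * Real.exp (|x - y| ^ β)) *
      (Real.sqrt (a / π) * Real.exp (-(a * y ^ 2))))
      ≤ ∫ y : ℝ, (W + 1) *
      (Real.sqrt (a / π) * (|y| ^ (0:ℝ) * Real.exp (Cβ * |y| ^ β) * Real.exp (-(a * y ^ 2)))
        + c * (Real.sqrt (a / π) *
          (|y| ^ p * Real.exp (Cβ * |y| ^ β) * Real.exp (-(a * y ^ 2))))) := by
    refine integral_mono_of_nonneg (Eventually.of_forall fun y => by positivity) hgint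
      (Eventually.of_forall fun y => ?_)
    have hpb := pointwise_bound p β μ hp hβ0 hβ2 hμ x y
    have hpos : (0:ℝ) ≤ Real.sqrt (a / π) * Real.exp (-(a * y ^ 2)) := by positivity
    calc (|x - y| ^ p * Real.exp (|x - y| ^ β)) *
        (Real.sqrt (a / π) * Real.exp (-(a * y ^ 2)))
        ≤ ((|μ * x| ^ p * Real.exp (|μ * x| ^ β) + 1) *
            ((1 + c * |y| ^ p) * Real.exp (Cβ * |y| ^ β))) *
          (Real.sqrt (a / π) * Real.exp (-(a * y ^ 2))) :=
          mul_le_mul_of_nonneg_right hpb hpos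
      _ = _ := by
          rw [← hWdef]
          simp only [Real.rpow_zero, one_mul]
          ring
  refine le_trans hmono ?_
  have hsplit : (∫ y : ℝ, (W + 1) *
      (Real.sqrt (a / π) * (|y| ^ (0:ℝ) * Real.exp (Cβ * |y| ^ β) * Real.exp (-(a * y ^ 2)))
        + c * (Real.sqrt (a / π) *
          (|y| ^ p * Real.exp (Cβ * |y| ^ β) * Real.exp (-(a * y ^ 2))))))
      = (W + 1) * (I 0 a + c * I p a) := by
    rw [MeasureTheory.integral_const_mul, integral_add hΦ0 (hΦp.const_mul c),
      MeasureTheory.integral_const_mul c]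
  rw [hsplit]
  calc (W + 1) * (I 0 a + c * I p a) ≤ (W + 1) * 2 := by
        refine mul_le_mul_of_nonneg_left hJa (by linarith)
    _ = 2 * (W + 1) := by ring
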